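/- For every n ≥ 2, the connected domination number of the graph H_n equals n, i.e., γ_c(H_n) = n. -/

import Mathlib

namespace CDG

/-- Vertices of the graph `B`. -/
inductive BVert : Type
  | a | e | b | b' | h | k | f1 | g1 | f2 | g2

/-- The edges of the graph `B`. -/
def BRel : BVert → BVert → Prop
  | .a, .e => True
  | .e, .b => True
  | .b, .b' => True
  | .a, .h => True
  | .h, .e => True
  | .e, .f1 => True
  | .f1, .b => True
  | .b, .f2 => True
  | .f2, .e => True
  | .e, .g1 => True
  | .g1, .f1 => True
  | .e, .g2 => True
  | .g2, .f2 => True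
  | .h, .k => True
  | .k, .a => True
  | _, _ => False

/-- The graph `B`. -/
def graphB : SimpleGraph BVert := SimpleGraph.fromRel BRel

/-- `S` is a connected dominating set of `G`: every vertex is in `S` or adjacent to a
vertex of `S`, and the subgraph induced by `S` is connected. -/
def IsConnDomSet {V : Type*} (G : SimpleGraph V) (S : Set V) : Prop :=
  (∀ v : V, v ∈ S ∨ ∃ u ∈ S, G.Adj u v) ∧ (G.induce S).Connected

/-- The connected domination number of `G`. -/
noncomputable def connDomNum {V : Type*} (G : SimpleGraph V) : ℕ :=
  sInf {m | ∃ S : Set V, IsConnDomSet G S ∧ S.ncard = m}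

/-- Vertices of the graph `H n`: `u i` is `u_i` for `0 ≤ i ≤ n+1`, `x t` is `x_{t+1}` and
`y t` is `y_{t+1}` for `0 ≤ t ≤ n-2`. -/
inductive HVert (n : ℕ) : Type
  | u : Fin (n + 2) → HVert n
  | x : Fin (n - 1) → HVert n
  | y : Fin (n - 1) → HVert n

/-- The edges of the graph `H n`. -/
def HRel (n : ℕ) : HVert n → HVert n → Prop
  | .u i, .u j => (j : ℕ) = (i : ℕ) + 1
  | .u i, .x t => (i : ℕ) = (t : ℕ) + 1 ∨ (i : ℕ) = (t : ℕ) + 2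
  | .x t, .y s => t = s
  | .y s, .u i => (i : ℕ) = (s : ℕ) + 2
  | _, _ => False

/-- The graph `H n`. -/
def graphH (n : ℕ) : SimpleGraph (HVert n) := SimpleGraph.fromRel (HRel n)

/-- Vertices of the graph `C m`: `cc i` is `c^{i+1}` and `dd i` is `d^{i+1}` for `0 ≤ i ≤ m-1`. -/
inductive CVert (m : ℕ) : Type
  | c : CVert m
  | d : CVert m
  | cc : Fin m → CVert m
  | dd : Fin m → CVert m

/-- The edges of the graph `C m`. -/
def CRel (m : ℕ) : CVert m → CVert m → Prop
  | .c, .d => True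
  | .c, .dd _ => True
  | .cc i, .dd j => i = j
  | _, _ => False

/-- The graph `C m`. -/
def graphC (m : ℕ) : SimpleGraph (CVert m) := SimpleGraph.fromRel (CRel m)

/-- Vertices of the graph `A`. -/
inductive AVert : Type
  | p1 | p2 | p3 | q1 | q2 | r1 | r2

/-- The edges of the graph `A`. -/
def ARel : AVert → AVert → Prop
  | .p1, .p2 => True
  | .p2, .p3 => True
  | .p1, .q1 => True
  | .q1, .r1 => True
  | .p2, .q1 => True
  | .p2, .r1 => True
  | .p2, .q2 => True
  | .q2, .r2 => True
  | .p3, .q2 => True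
  | .p3, .r2 => True
  | _, _ => False

/-- Vertices of the graph `G_F`, for a formula with `k` variables and `n` clauses:
`k` copies of `B`, `n` copies of `C n`, one copy of `H (2n+7)`, and a copy of `A`
exactly when `k` is odd (realized as `AVert × Fin (k % 2)`). -/
abbrev GVert (k n : ℕ) : Type :=
  (Fin k × BVert) ⊕ (Fin n × CVert n) ⊕ HVert (2 * n + 7) ⊕ (AVert × Fin (k % 2))

/-- The edges of the graph `G_F`, where the formula `F` assigns to each clause `j`
the (nonempty) set of variables appearing in it. -/
def GRel (k n : ℕ) (F : Fin n → Finset (Fin k)) : GVert k n → GVert k n → Prop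
  | .inl (i, v), .inl (i', w) => i = i' ∧ BRel v w
  | .inr (.inl (j, v)), .inr (.inl (j', w)) => j = j' ∧ CRel n v w
  | .inr (.inr (.inl v)), .inr (.inr (.inl w)) => HRel (2 * n + 7) v w
  | .inr (.inr (.inr (v, _))), .inr (.inr (.inr (w, _))) => ARel v w
  | .inr (.inl (j, v)), .inl (i, w) =>
      i ∈ F j ∧ w = .a ∧ (v = .c ∨ ∃ t, v = .cc t)
  | .inr (.inr (.inl v)), .inl (i, w) =>
      v = .u ⟨0, by omega⟩ ∧ (w = .a ∨ w = .b)
  | .inr (.inr (.inr (v, _))), .inr (.inr (.inl w)) =>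
      v = .p1 ∧ w = .u ⟨0, by omega⟩
  | _, _ => False

/-- The graph `G_F`. -/
def graphGF (k n : ℕ) (F : Fin n → Finset (Fin k)) : SimpleGraph (GVert k n) :=
  SimpleGraph.fromRel (GRel k n F)

/-- Vertices of the graph `G'_F`, for a formula with `k` variables and `n` clauses:
`k` copies of `B`, `n` copies of `C n`, one copy of `H 6`, and a copy of `A`
exactly when `k` is odd (realized as `AVert × Fin (k % 2)`). -/
abbrev GVert' (k n : ℕ) : Type :=
  (Fin k × BVert) ⊕ (Fin n × CVert n) ⊕ HVert 6 ⊕ (AVert × Fin (k % 2))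

/-- The edges of the graph `G'_F`. -/
def GRel' (k n : ℕ) (F : Fin n → Finset (Fin k)) : GVert' k n → GVert' k n → Prop
  | .inl (i, v), .inl (i', w) => i = i' ∧ BRel v w
  | .inr (.inl (j, v)), .inr (.inl (j', w)) => j = j' ∧ CRel n v w
  | .inr (.inr (.inl v)), .inr (.inr (.inl w)) => HRel 6 v w
  | .inr (.inr (.inr (v, _))), .inr (.inr (.inr (w, _))) => ARel v w
  | .inr (.inl (j, v)), .inl (i, w) =>
      i ∈ F j ∧ w = .a ∧ (v = .c ∨ ∃ t, v = .cc t)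
  | .inr (.inr (.inl v)), .inl (i, w) =>
      v = .u ⟨7, by omega⟩ ∧ (w = .a ∨ w = .b)
  | .inr (.inr (.inr (v, _))), .inr (.inr (.inl w)) =>
      v = .p1 ∧ w = .u ⟨7, by omega⟩
  | _, _ => False

/-- The graph `G'_F`. -/
def graphGF' (k n : ℕ) (F : Fin n → Finset (Fin k)) : SimpleGraph (GVert' k n) :=
  SimpleGraph.fromRel (GRel' k n F)

private lemma hrel_adj {n : ℕ} {a b : HVert n} (hne : a ≠ b) (h : HRel n a b) :
    (graphH n).Adj a b := by
  rw [graphH, SimpleGraph.fromRel_adj]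
  exact ⟨hne, Or.inl h⟩

instance (n : ℕ) : Finite (HVert n) := by
  apply Finite.of_injective (fun v : HVert n => match v with
    | .u i => (Sum.inl i : Fin (n+2) ⊕ Fin (n-1) ⊕ Fin (n-1))
    | .x t => Sum.inr (Sum.inl t)
    | .y t => Sum.inr (Sum.inr t))
  intro a b h
  cases a <;> cases b <;> simp_all

private def phi (n : ℕ) : HVert n → ℕ
  | .u i => if (i : ℕ) ≤ 1 then 0 else (i : ℕ) - 1
  | .x t => (t : ℕ) + 1
  | .y t => (t : ℕ) + 1

theorem connDomNum_graphH (n : ℕ) (hn : 2 ≤ n) : connDomNum (graphH n) = n := by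
  set f : Fin n → HVert n := fun j => HVert.u ⟨(j : ℕ) + 1, by omega⟩ with hf
  have hfinj : Function.Injective f := by
    intro a b h
    simp only [hf, HVert.u.injEq, Fin.mk.injEq] at h
    exact Fin.ext (by omega)
  set S : Set (HVert n) := Set.range f with hS
  have hmemS : ∀ j : Fin n, f j ∈ S := fun j => Set.mem_range_self j
  have hmem : n ∈ {m | ∃ S : Set (HVert n), IsConnDomSet (graphH n) S ∧ S.ncard = m} := by
    refine ⟨S, ⟨?_, ?_⟩, ?_⟩
    · -- dominating
      intro v
      match v with
      | .u i =>
        rcases Nat.lt_or_ge (i : ℕ) 1 with h | h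
        · right
          refine ⟨f ⟨0, by omega⟩, hmemS _, ?_⟩
          refine (hrel_adj ?_ ?_).symm
          · intro he
            injection he with he
            rw [Fin.ext_iff] at he
            simp at he; omega
          · show ((⟨0 + 1, _⟩ : Fin (n + 2)) : ℕ) = (i : ℕ) + 1
            simp only [Fin.val_mk]; omega
        · rcases Nat.lt_or_ge (i : ℕ) (n + 1) with h2 | h2
          · left
            refine ⟨⟨(i : ℕ) - 1, by omega⟩, ?_⟩
            simp only [hf, HVert.u.injEq]
            apply Fin.ext
            simp; omega
          · right
            refine ⟨f ⟨n - 1, by omega⟩, hmemS _, ?_⟩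
            refine hrel_adj ?_ ?_
            · intro he
              injection he with he
              rw [Fin.ext_iff] at he
              simp at he; omega
            · show (i : ℕ) = ((⟨(n - 1) + 1, _⟩ : Fin (n + 2)) : ℕ) + 1
              simp; omega
      | .x t =>
        right
        refine ⟨f ⟨(t : ℕ), by omega⟩, hmemS _, ?_⟩
        refine hrel_adj (by simp [hf]) ?_
        show ((⟨(t : ℕ) + 1, _⟩ : Fin (n + 2)) : ℕ) = (t : ℕ) + 1 ∨
          ((⟨(t : ℕ) + 1, _⟩ : Fin (n + 2)) : ℕ) = (t : ℕ) + 2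
        simp
      | .y t =>
        right
        have ht : (t : ℕ) + 1 < n := by omega
        refine ⟨f ⟨(t : ℕ) + 1, ht⟩, hmemS _, ?_⟩
        refine (hrel_adj (by simp [hf]) ?_).symm
        show ((⟨(t : ℕ) + 1 + 1, _⟩ : Fin (n + 2)) : ℕ) = (t : ℕ) + 2
        simp
    · -- connected
      have h0 : (0 : ℕ) < n := by omega
      have base : ∀ m : ℕ, (hm : m < n) →
          ((graphH n).induce S).Reachable ⟨f ⟨0, h0⟩, hmemS _⟩ ⟨f ⟨m, hm⟩, hmemS _⟩ := by
        intro m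
        induction m with
        | zero => intro hm; rfl
        | succ k ih =>
          intro hm
          have hk : k < n := by omega
          refine (ih hk).trans (SimpleGraph.Adj.reachable ?_)
          show (graphH n).Adj (f ⟨k, hk⟩) (f ⟨k + 1, hm⟩)
          refine hrel_adj ?_ ?_
          · intro he
            injection he with he
            rw [Fin.ext_iff] at he
            simp at he
          · show ((⟨k + 1 + 1, _⟩ : Fin (n + 2)) : ℕ) = ((⟨k + 1, _⟩ : Fin (n + 2)) : ℕ) + 1
            simp
      rw [SimpleGraph.connected_iff]
      constructor
      · rintro ⟨a, ha⟩ ⟨b, hb⟩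
        obtain ⟨⟨ja, hja⟩, rfl⟩ := ha
        obtain ⟨⟨jb, hjb⟩, rfl⟩ := hb
        exact (base ja hja).symm.trans (base jb hjb)
      · exact ⟨⟨f ⟨0, h0⟩, hmemS _⟩⟩
    · -- cardinality
      rw [hS, ← Nat.card_coe_set_eq, Nat.card_range_of_injective hfinj,
        Nat.card_eq_fintype_card, Fintype.card_fin]
  apply le_antisymm (Nat.sInf_le hmem)
  apply le_csInf ⟨n, hmem⟩
  rintro m ⟨T, ⟨hdom, -⟩, rfl⟩
  have key : ↑(Finset.range n) ⊆ phi n '' T := by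
    intro j hj
    simp only [Finset.coe_range, Set.mem_Iio] at hj
    rcases Nat.eq_zero_or_pos j with rfl | hjpos
    · rcases hdom (.u ⟨0, by omega⟩) with h | ⟨w, hw, hadj⟩
      · exact ⟨_, h, by simp [phi]⟩
      · rw [graphH, SimpleGraph.fromRel_adj] at hadj
        obtain ⟨-, hadj⟩ := hadj
        refine ⟨w, hw, ?_⟩
        rcases w with i | t | t <;> simp only [HRel] at hadj
        · rcases hadj with h1 | h1 <;> simp at h1
          simp [phi, h1]
        · rcases hadj with h1 | h1
          · exact absurd h1 (by simp)
          · simp at h1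
        · rcases hadj with h1 | h1
          · simp at h1
          · exact absurd h1 (by simp)
    · have hjn : j - 1 < n - 1 := by omega
      rcases hdom (.y ⟨j - 1, hjn⟩) with h | ⟨w, hw, hadj⟩
      · refine ⟨_, h, ?_⟩
        simp [phi]; omega
      · rw [graphH, SimpleGraph.fromRel_adj] at hadj
        obtain ⟨-, hadj⟩ := hadj
        refine ⟨w, hw, ?_⟩
        rcases w with i | t | t <;> simp only [HRel] at hadj
        · rcases hadj with h1 | h1
          · exact absurd h1 (by simp)
          · have h1' : (i : ℕ) = (j - 1) + 2 := h1
            have : ¬ ((i : ℕ) ≤ 1) := by omega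
            simp [phi, this, h1']; omega
        · rcases hadj with h1 | h1
          · subst h1; simp [phi]; omega
          · exact absurd h1 (by simp)
        · rcases hadj with h1 | h1 <;> exact absurd h1 (by simp)
  have h1 : n ≤ (phi n '' T).ncard := by
    calc n = (↑(Finset.range n) : Set ℕ).ncard := by
            rw [Set.ncard_coe_finset, Finset.card_range]
      _ ≤ (phi n '' T).ncard := Set.ncard_le_ncard key (T.toFinite.image _)
  exact h1.trans (Set.ncard_image_le T.toFinite)

end CDG
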